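/- Let k ≥ 0 and 0 ≤ s ≤ k+1. There exists a constant C > 0 depending only on k and s such that the following holds: for every partition a = x_1 < … < x_N = b of (a,b) and every function u that is (s+1)-times continuously differentiable on [a,b], there exists a function π_h u, continuous on [a,b], which on each element I_i = (x_i, x_{i+1}) is a polynomial of degree at most k+1 and satisfies (i) ∫_{I_i} (π_h u)′ q dx = ∫_{I_i} u′ q dx for all polynomials q of degree at most k, (ii) π_h u(x_i) = u(x_i) for i = 1, …, N, and (iii) ‖u − π_h u‖_{L²(I_i)} + h_i ‖(u − π_h u)′‖_{L²(I_i)} ≤ C h_i^{s+1} ‖u‖_{H^{s+1}(I_i)} on every element, where h_i = x_{i+1} − x_i and ‖u‖_{H^{s+1}(I_i)} = (Σ_{j=0}^{s+1} ∫_{I_i} |u^{(j)}|² dx)^{1/2}. -/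

import Mathlib

open MeasureTheory Set

noncomputable section

namespace PihAux

open Polynomial intervalIntegral

lemma contOn_intervalIntegrable {c d : ℝ} (hcd : c ≤ d) {f : ℝ → ℝ}
    (hf : ContinuousOn f (Icc c d)) : IntervalIntegrable f volume c d :=
  ContinuousOn.intervalIntegrable (by rwa [uIcc_of_le hcd])

lemma cs_sq {c d : ℝ} (hcd : c ≤ d) {f g : ℝ → ℝ}
    (hf : ContinuousOn f (Icc c d)) (hg : ContinuousOn g (Icc c d)) :
    (∫ t in c..d, f t * g t) ^ 2 ≤ (∫ t in c..d, f t ^ 2) * (∫ t in c..d, g t ^ 2) := by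
  set A := ∫ t in c..d, f t ^ 2 with hA
  set B := ∫ t in c..d, g t ^ 2 with hB
  set T := ∫ t in c..d, f t * g t with hT
  have key : ∀ x : ℝ, 0 ≤ A * (x * x) + (2 * T) * x + B := by
    intro x
    have if2 : IntervalIntegrable (fun t => (x * x) * f t ^ 2) volume c d :=
      (contOn_intervalIntegrable hcd (hf.pow 2)).const_mul _
    have ifg : IntervalIntegrable (fun t => (2 * x) * (f t * g t)) volume c d :=
      (contOn_intervalIntegrable hcd (hf.mul hg)).const_mul _
    have ig2 : IntervalIntegrable (fun t => g t ^ 2) volume c d :=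
      contOn_intervalIntegrable hcd (hg.pow 2)
    have h1 : (∫ t in c..d, (x * f t + g t) ^ 2) = A * (x * x) + (2 * T) * x + B := by
      have e1 : (fun t => (x * f t + g t) ^ 2)
          = fun t => (x * x) * f t ^ 2 + ((2 * x) * (f t * g t) + g t ^ 2) := by
        funext t; ring
      rw [e1, intervalIntegral.integral_add if2 (ifg.add ig2),
        intervalIntegral.integral_add ifg ig2,
        intervalIntegral.integral_const_mul, intervalIntegral.integral_const_mul]
      ring
    rw [← h1]
    exact intervalIntegral.integral_nonneg hcd fun t _ => sq_nonneg _
  have h2 := discrim_le_zero key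
  rw [discrim] at h2
  nlinarith

lemma cs_abs {c d : ℝ} (hcd : c ≤ d) {f g : ℝ → ℝ}
    (hf : ContinuousOn f (Icc c d)) (hg : ContinuousOn g (Icc c d)) :
    |∫ t in c..d, f t * g t|
      ≤ Real.sqrt (∫ t in c..d, f t ^ 2) * Real.sqrt (∫ t in c..d, g t ^ 2) := by
  have hA : 0 ≤ ∫ t in c..d, f t ^ 2 :=
    intervalIntegral.integral_nonneg hcd fun t _ => sq_nonneg _
  calc |∫ t in c..d, f t * g t| = Real.sqrt ((∫ t in c..d, f t * g t) ^ 2) :=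
        (Real.sqrt_sq_eq_abs _).symm
    _ ≤ Real.sqrt ((∫ t in c..d, f t ^ 2) * ∫ t in c..d, g t ^ 2) :=
        Real.sqrt_le_sqrt (cs_sq hcd hf hg)
    _ = _ := Real.sqrt_mul hA _

lemma poincare {c d : ℝ} (hcd : c ≤ d) {e : ℝ → ℝ} (he : ContinuousOn e (Icc c d)) :
    (∫ t in c..d, (∫ τ in c..t, e τ) ^ 2) ≤ (d - c) ^ 2 * ∫ t in c..d, e t ^ 2 := by
  have hI : 0 ≤ ∫ t in c..d, e t ^ 2 :=
    intervalIntegral.integral_nonneg hcd fun t _ => sq_nonneg _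
  have hcont : ContinuousOn (fun t => ∫ τ in c..t, e τ) (Icc c d) := by
    have : IntegrableOn e (uIcc c d) volume := by
      rw [uIcc_of_le hcd]; exact he.integrableOn_Icc
    have h := intervalIntegral.continuousOn_primitive_interval this
    rwa [uIcc_of_le hcd] at h
  have hpt : ∀ t ∈ Icc c d, (∫ τ in c..t, e τ) ^ 2 ≤ (d - c) * ∫ τ in c..d, e τ ^ 2 := by
    intro t ht
    have he' : ContinuousOn e (Icc c t) := he.mono (Icc_subset_Icc le_rfl ht.2)
    have h1 : (∫ τ in c..t, e τ) = ∫ τ in c..t, (1 : ℝ) * e τ := by simp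
    have h2 := cs_sq ht.1 (continuousOn_const (c := (1:ℝ))) he'
    have h3 : (∫ τ in c..t, (1 : ℝ) ^ 2) = t - c := by simp
    have h4 : (∫ τ in c..t, e τ ^ 2) ≤ ∫ τ in c..d, e τ ^ 2 := by
      refine intervalIntegral.integral_mono_interval le_rfl ht.1 ht.2 ?_
        (contOn_intervalIntegrable hcd (he.pow 2))
      exact Filter.Eventually.of_forall fun τ => sq_nonneg _
    have h5 : 0 ≤ ∫ τ in c..t, e τ ^ 2 :=
      intervalIntegral.integral_nonneg ht.1 fun τ _ => sq_nonneg _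
    rw [h1]
    calc (∫ τ in c..t, (1:ℝ) * e τ) ^ 2 ≤ (∫ τ in c..t, (1:ℝ) ^ 2) * ∫ τ in c..t, e τ ^ 2 := h2
      _ = (t - c) * ∫ τ in c..t, e τ ^ 2 := by rw [h3]
      _ ≤ (d - c) * ∫ τ in c..d, e τ ^ 2 := by
          have ht1 : t - c ≤ d - c := by linarith [ht.2]
          have := mul_le_mul h4 (le_refl (1:ℝ)) zero_le_one hI -- dummy
          nlinarith [ht.1, h4, h5]
  calc (∫ t in c..d, (∫ τ in c..t, e τ) ^ 2)
      ≤ ∫ _t in c..d, ((d - c) * ∫ τ in c..d, e τ ^ 2) := by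
        refine intervalIntegral.integral_mono_on hcd
          (contOn_intervalIntegrable hcd (hcont.pow 2))
          intervalIntegrable_const hpt
    _ = (d - c) * ((d - c) * ∫ τ in c..d, e τ ^ 2) := by
        rw [intervalIntegral.integral_const, smul_eq_mul]
    _ = (d - c) ^ 2 * ∫ t in c..d, e t ^ 2 := by ring

lemma exists_L2proj (k : ℕ) {c d : ℝ} (hcd : c < d) {g : ℝ → ℝ}
    (hg : ContinuousOn g (Icc c d)) :
    ∃ p : ℝ[X], p.degree ≤ (k : WithBot ℕ) ∧
      ∀ q : ℝ[X], q.degree ≤ (k : WithBot ℕ) →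
        (∫ t in c..d, p.eval t * q.eval t) = ∫ t in c..d, g t * q.eval t := by
  haveI : FiniteDimensional ℝ (degreeLT ℝ (k+1)) :=
    LinearEquiv.finiteDimensional (Polynomial.degreeLTEquiv ℝ (k + 1)).symm
  have iipp : ∀ p q : ℝ[X], IntervalIntegrable (fun t => p.eval t * q.eval t) volume c d :=
    fun p q => (p.continuous.mul q.continuous).intervalIntegrable _ _
  have iigp : ∀ q : ℝ[X], IntervalIntegrable (fun t => g t * q.eval t) volume c d :=
    fun q => contOn_intervalIntegrable hcd.le (hg.mul q.continuous.continuousOn)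
  -- inner functional for fixed p : the map q ↦ ∫ p q
  have mkdual : ∀ f : ℝ → ℝ, (∀ q : ℝ[X], IntervalIntegrable (fun t => f t * q.eval t) volume c d) →
      ∃ L : Module.Dual ℝ (degreeLT ℝ (k+1)), ∀ q : degreeLT ℝ (k+1), L q = ∫ t in c..d, f t * (q : ℝ[X]).eval t := by
    intro f hf
    refine ⟨{ toFun := fun q => ∫ t in c..d, f t * (q : ℝ[X]).eval t
              map_add' := ?_
              map_smul' := ?_ }, fun q => rfl⟩
    · intro q r
      simp only [Submodule.coe_add, eval_add, mul_add]
      exact intervalIntegral.integral_add (hf q) (hf r)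
    · intro m q
      simp only [SetLike.val_smul, smul_eq_mul, RingHom.id_apply]
      have e : (fun t => f t * (m • (q : ℝ[X])).eval t)
          = fun t => m * (f t * (q : ℝ[X]).eval t) := by
        funext t; simp [smul_eq_mul]; ring
      rw [e, intervalIntegral.integral_const_mul]
  choose Lmap hLmap using mkdual
  set B : degreeLT ℝ (k+1) →ₗ[ℝ] Module.Dual ℝ (degreeLT ℝ (k+1)) :=
    { toFun := fun p => Lmap (fun t => (p : ℝ[X]).eval t) (iipp _)
      map_add' := by
        intro p r
        apply LinearMap.ext
        intro q
        simp only [LinearMap.add_apply, hLmap]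
        simp only [Submodule.coe_add, eval_add, add_mul]
        exact intervalIntegral.integral_add (iipp _ _) (iipp _ _)
      map_smul' := by
        intro m p
        apply LinearMap.ext
        intro q
        simp only [LinearMap.smul_apply, hLmap, RingHom.id_apply, smul_eq_mul]
        have e : (fun t => (m • (p : ℝ[X])).eval t * (q : ℝ[X]).eval t)
            = fun t => m * ((p : ℝ[X]).eval t * (q : ℝ[X]).eval t) := by
          funext t; simp [smul_eq_mul]; ring
        simp only [SetLike.val_smul]
        rw [e, intervalIntegral.integral_const_mul] } with hB
  have hBapply : ∀ p q : degreeLT ℝ (k+1), B p q = ∫ t in c..d, (p : ℝ[X]).eval t * (q : ℝ[X]).eval t :=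
    fun p q => hLmap _ _ q
  have hinj : Function.Injective B := by
    rw [← LinearMap.ker_eq_bot]
    apply LinearMap.ker_eq_bot'.2
    intro p hp
    by_contra hne
    have hp0 : (p : ℝ[X]) ≠ 0 := fun h => hne (by exact Subtype.ext h)
    have hfin : {t : ℝ | (p : ℝ[X]).eval t = 0}.Finite := by
      apply Set.Finite.subset (p : ℝ[X]).roots.toFinset.finite_toSet
      intro t ht
      have hroot : (↑p : ℝ[X]).IsRoot t := ht
      simp only [Finset.mem_coe, Multiset.mem_toFinset]
      exact (Polynomial.mem_roots hp0).2 hroot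
    have hpos : (0 : ℝ) < ∫ t in c..d, (p : ℝ[X]).eval t * (p : ℝ[X]).eval t := by
      apply intervalIntegral.integral_pos hcd
      · exact ((p : ℝ[X]).continuous.mul (p : ℝ[X]).continuous).continuousOn
      · exact fun t _ => mul_self_nonneg _
      · obtain ⟨t, ht⟩ := ((Set.Icc_infinite hcd).diff hfin).nonempty
        exact ⟨t, ht.1, mul_self_pos.2 (by simpa using ht.2)⟩
    have h0 : B p p = 0 := by rw [hp]; rfl
    rw [hBapply] at h0
    exact hpos.ne' h0
  have hsurj : Function.Surjective B := by
    have hrank : Module.finrank ℝ (degreeLT ℝ (k+1)) = Module.finrank ℝ (Module.Dual ℝ (degreeLT ℝ (k+1))) :=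
      (Subspace.dual_finrank_eq).symm
    exact (LinearMap.injective_iff_surjective_of_finrank_eq_finrank hrank).1 hinj
  obtain ⟨p, hp⟩ := hsurj (Lmap g iigp)
  have hmem : ∀ {q : ℝ[X]}, q.degree ≤ (k : WithBot ℕ) → q ∈ degreeLT ℝ (k+1) := by
    intro q hq
    rw [Polynomial.degreeLT_succ_eq_degreeLE]
    exact Polynomial.mem_degreeLE.2 hq
  refine ⟨(p : ℝ[X]), ?_, ?_⟩
  · have hpp := Polynomial.mem_degreeLT.1 p.2
    rw [Polynomial.degree_le_iff_coeff_zero]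
    intro m hm
    have hkm : k + 1 ≤ m := by exact_mod_cast hm
    exact (Polynomial.degree_lt_iff_coeff_zero _ _).1 hpp m hkm
  · intro q hq
    have := LinearMap.congr_fun hp ⟨q, hmem hq⟩
    rw [hBapply] at this
    rw [this, hLmap]

/-- Polynomial antiderivative. -/
def antideriv (p : ℝ[X]) : ℝ[X] := p.sum fun n a => C (a / (n + 1)) * X ^ (n + 1)

lemma derivative_antideriv (p : ℝ[X]) : (antideriv p).derivative = p := by
  conv_rhs => rw [← p.sum_C_mul_X_pow_eq]
  rw [antideriv, Polynomial.sum_def, Polynomial.sum_def, map_sum]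
  refine Finset.sum_congr rfl fun n _ => ?_
  rw [Polynomial.derivative_C_mul, Polynomial.derivative_X_pow]
  rw [← mul_assoc, ← Polynomial.C_mul, Nat.add_sub_cancel]
  congr 2
  push_cast
  rw [div_mul_cancel₀]
  positivity
lemma degree_antideriv_le (p : ℝ[X]) {k : ℕ} (hp : p.degree ≤ (k : WithBot ℕ)) :
    (antideriv p).degree ≤ ((k + 1 : ℕ) : WithBot ℕ) := by
  rw [antideriv, Polynomial.sum_def]
  refine (Polynomial.degree_sum_le _ _).trans ?_
  refine Finset.sup_le fun n hn => ?_
  refine (Polynomial.degree_C_mul_X_pow_le _ _).trans ?_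
  have h1 : (n : WithBot ℕ) ≤ (k : WithBot ℕ) :=
    le_trans (Polynomial.le_degree_of_ne_zero (Polynomial.mem_support_iff.1 hn)) hp
  have h2 : n ≤ k := by exact_mod_cast h1
  exact_mod_cast Nat.succ_le_succ h2

/-- Iterated primitives based at `c`. -/
def primIter (c : ℝ) (e : ℝ → ℝ) : ℕ → ℝ → ℝ
  | 0 => e
  | j + 1 => fun t => ∫ τ in c..t, primIter c e j τ

lemma primIter_contOn {c d : ℝ} (hcd : c ≤ d) {e : ℝ → ℝ}
    (he : ContinuousOn e (Icc c d)) : ∀ j, ContinuousOn (primIter c e j) (Icc c d)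
  | 0 => he
  | (j + 1) => by
    have ih := primIter_contOn hcd he j
    have hint : IntegrableOn (primIter c e j) (uIcc c d) volume := by
      rw [uIcc_of_le hcd]; exact ih.integrableOn_Icc
    have h := intervalIntegral.continuousOn_primitive_interval hint
    rwa [uIcc_of_le hcd] at h

lemma primIter_succ_left {c : ℝ} {e : ℝ → ℝ} (j : ℕ) : primIter c e (j + 1) c = 0 := by
  simp [primIter]

lemma primIter_hasDerivAt {c d : ℝ} (hcd : c ≤ d) {e : ℝ → ℝ}
    (he : ContinuousOn e (Icc c d)) (j : ℕ) {x : ℝ} (hx : x ∈ Ioo c d) :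
    HasDerivAt (primIter c e (j + 1)) (primIter c e j x) x := by
  have hcont := primIter_contOn hcd he j
  apply intervalIntegral.integral_hasDerivAt_right
  · exact contOn_intervalIntegrable hx.1.le (hcont.mono (Icc_subset_Icc le_rfl hx.2.le))
  · exact ContinuousOn.stronglyMeasurableAtFilter isOpen_Ioo
      (hcont.mono Ioo_subset_Icc_self) x hx
  · exact (hcont.mono Ioo_subset_Icc_self).continuousAt (Ioo_mem_nhds hx.1 hx.2)

/-- FTC on `[c, d]` with interior derivatives. -/
lemma ftc_on {c d : ℝ} (hcd : c ≤ d) {F F' : ℝ → ℝ} (hF : ContinuousOn F (Icc c d))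
    (hd : ∀ x ∈ Ioo c d, HasDerivAt F (F' x) x) (hF' : ContinuousOn F' (Icc c d)) :
    ∫ t in c..d, F' t = F d - F c :=
  intervalIntegral.integral_eq_sub_of_hasDeriv_right_of_le hcd hF
    (fun x hx => (hd x hx).hasDerivWithinAt) (contOn_intervalIntegrable hcd hF')


lemma primIter_zero (c : ℝ) (e : ℝ → ℝ) : primIter c e 0 = e := rfl

lemma primIter_succ (c : ℝ) (e : ℝ → ℝ) (j : ℕ) :
    primIter c e (j + 1) = fun t => ∫ τ in c..t, primIter c e j τ := rfl
lemma elem (k s : ℕ) (hs : s ≤ k + 1) {a b c d : ℝ} (hac : a ≤ c) (hcd : c < d) (hdb : d ≤ b)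
    {u : ℝ → ℝ} (hu : ContDiffOn ℝ (s + 1) u (Set.Icc a b)) :
    ∃ P : Polynomial ℝ, P.degree ≤ ((k + 1 : ℕ) : WithBot ℕ) ∧
      (∀ q : Polynomial ℝ, q.degree ≤ (k : WithBot ℕ) →
        (∫ t in c..d, P.derivative.eval t * q.eval t)
          = ∫ t in c..d, derivWithin u (Set.Icc a b) t * q.eval t) ∧
      (P.eval c = u c ∧ P.eval d = u d) ∧
      Real.sqrt (∫ t in c..d, (u t - P.eval t) ^ 2)
        + (d - c) * Real.sqrt (∫ t in c..d,
            (derivWithin u (Set.Icc a b) t - P.derivative.eval t) ^ 2)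
      ≤ 2 * (d - c) ^ (s + 1) *
          Real.sqrt (∑ j ∈ Finset.range (s + 2),
            ∫ t in c..d, (iteratedDerivWithin j u (Set.Icc a b) t) ^ 2) := by
  have hab : a < b := lt_of_le_of_lt hac (lt_of_lt_of_le hcd hdb)
  have hdc0 : (0:ℝ) < d - c := by linarith
  have hUD : UniqueDiffOn ℝ (Icc a b) := uniqueDiffOn_Icc hab
  have hsub : Icc c d ⊆ Icc a b := Icc_subset_Icc hac hdb
  have hIooSub : Ioo c d ⊆ Ioo a b := Ioo_subset_Ioo hac hdb
  set G : ℕ → ℝ → ℝ := fun j => iteratedDerivWithin j u (Icc a b) with hG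
  set g0 : ℝ → ℝ := derivWithin u (Set.Icc a b) with hg0def
  have hGcont : ∀ j, j ≤ s + 1 → ContinuousOn (G j) (Icc a b) := fun j hj =>
    hu.continuousOn_iteratedDerivWithin (by exact_mod_cast hj) hUD
  have hGderiv : ∀ j, j ≤ s → ∀ x ∈ Ioo a b, HasDerivAt (G j) (G (j + 1) x) x := by
    intro j hj x hx
    have hdiff : DifferentiableOn ℝ (G j) (Icc a b) :=
      hu.differentiableOn_iteratedDerivWithin (by exact_mod_cast Nat.lt_succ_of_le hj) hUD
    have hmem : x ∈ Icc a b := Ioo_subset_Icc_self hx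
    have h2 : HasDerivAt (G j) (derivWithin (G j) (Icc a b) x) x :=
      ((hdiff x hmem).hasDerivWithinAt).hasDerivAt (Icc_mem_nhds hx.1 hx.2)
    rwa [show derivWithin (G j) (Icc a b) x = G (j + 1) x from
      (congrFun iteratedDerivWithin_succ x).symm] at h2
  have hg0G : ∀ t ∈ Icc a b, G 1 t = g0 t := fun t ht => congrFun iteratedDerivWithin_one t
  have hucont : ContinuousOn u (Icc a b) := hu.continuousOn
  have hg0cont : ContinuousOn g0 (Icc a b) :=
    (hGcont 1 (by omega)).congr fun t ht => (hg0G t ht).symm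
  have huderiv : ∀ x ∈ Ioo a b, HasDerivAt u (g0 x) x := by
    intro x hx
    have e0 : G 0 = u := iteratedDerivWithin_zero
    have h := hGderiv 0 (Nat.zero_le _) x hx
    rw [e0] at h
    rwa [hg0G x (Ioo_subset_Icc_self hx)] at h
  obtain ⟨Q, hQdeg, hQint⟩ := exists_L2proj k hcd (hg0cont.mono hsub)
  set P : ℝ[X] := antideriv Q + C (u c - (antideriv Q).eval c) with hP
  have hPder : P.derivative = Q := by
    rw [hP, derivative_add, derivative_C, add_zero, derivative_antideriv]
  have hPdeg : P.degree ≤ ((k + 1 : ℕ) : WithBot ℕ) := by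
    refine (degree_add_le _ _).trans (max_le (degree_antideriv_le Q hQdeg) ?_)
    exact degree_C_le.trans (by exact_mod_cast Nat.zero_le (k + 1))
  have hPc : P.eval c = u c := by simp [hP]
  have hi : ∀ q : ℝ[X], q.degree ≤ (k : WithBot ℕ) →
      (∫ t in c..d, P.derivative.eval t * q.eval t) = ∫ t in c..d, g0 t * q.eval t := by
    intro q hq; rw [hPder]; exact hQint q hq
  have hftcu : ∫ t in c..d, g0 t = u d - u c :=
    ftc_on hcd.le (hucont.mono hsub) (fun x hx => huderiv x (hIooSub hx))
      (hg0cont.mono hsub)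
  have hftcP : ∫ t in c..d, Q.eval t = P.eval d - P.eval c := by
    rw [← hPder]
    exact intervalIntegral.integral_eq_sub_of_hasDerivAt (fun x _ => P.hasDerivAt x)
      ((P.derivative.continuous).intervalIntegrable _ _)
  have hQ1 : (∫ t in c..d, Q.eval t) = ∫ t in c..d, g0 t := by
    have h := hQint 1 (Polynomial.degree_one_le.trans (by exact_mod_cast Nat.zero_le k))
    simpa using h
  have hPd : P.eval d = u d := by
    rw [hQ1, hftcu] at hftcP
    rw [hPc] at hftcP
    linarith
  -- the error function
  set E : ℝ → ℝ := fun t => g0 t - Q.eval t with hE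
  have hEcont : ContinuousOn E (Icc c d) :=
    (hg0cont.mono hsub).sub Q.continuous.continuousOn
  have horthE : ∀ q : ℝ[X], q.degree ≤ (k : WithBot ℕ) →
      (∫ t in c..d, E t * q.eval t) = 0 := by
    intro q hq
    have e1 : (fun t => E t * q.eval t)
        = fun t => g0 t * q.eval t - Q.eval t * q.eval t := by
      funext t; rw [hE]; ring
    rw [e1, intervalIntegral.integral_sub (f := fun t => g0 t * q.eval t)
      (g := fun t => Q.eval t * q.eval t)
      (contOn_intervalIntegrable hcd.le ((hg0cont.mono hsub).mul q.continuous.continuousOn))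
      ((Q.continuous.mul q.continuous).intervalIntegrable _ _), hQint q hq, sub_self]
  -- orthogonality of iterated primitives to monomials
  have hO : ∀ j m : ℕ, m + j ≤ k → (∫ t in c..d, primIter c E j t * t ^ m) = 0 := by
    intro j
    induction j with
    | zero =>
      intro m hm
      have h := horthE (X ^ m) (by
        simpa [Polynomial.degree_X_pow] using (by exact_mod_cast (by omega : m ≤ k) :
          ((m : WithBot ℕ) ≤ (k : WithBot ℕ))))
      simpa [primIter_zero] using h
    | succ j ih =>
      intro m hm
      have hEd : primIter c E (j + 1) d = 0 := by
        have h0 := ih 0 (by omega)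
        rw [primIter_succ]
        simpa using h0
      have hcontj : ContinuousOn (primIter c E j) (Icc c d) :=
        primIter_contOn hcd.le hEcont j
      have hcontj1 : ContinuousOn (primIter c E (j + 1)) (Icc c d) :=
        primIter_contOn hcd.le hEcont (j + 1)
      have hFd : ∀ x ∈ Ioo c d, HasDerivAt (fun t => primIter c E (j + 1) t * t ^ (m + 1))
          (primIter c E j x * x ^ (m + 1)
            + primIter c E (j + 1) x * (((m : ℝ) + 1) * x ^ m)) x := by
        intro x hx
        have h := (primIter_hasDerivAt hcd.le hEcont j hx).mul (hasDerivAt_pow (m + 1) x)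
        simp at h; exact h
      have hFTC := ftc_on (F := fun t => primIter c E (j + 1) t * t ^ (m + 1)) hcd.le (hcontj1.mul (continuousOn_pow (m + 1)))
        hFd ((hcontj.mul (continuousOn_pow (m + 1))).add
          (hcontj1.mul ((continuousOn_const).mul (continuousOn_pow m))))
      rw [hEd] at hFTC
      rw [primIter_succ_left] at hFTC
      rw [intervalIntegral.integral_add (f := fun t => primIter c E j t * t ^ (m + 1))
        (g := fun t => primIter c E (j + 1) t * (((m : ℝ) + 1) * t ^ m))
        (contOn_intervalIntegrable hcd.le (hcontj.mul (continuousOn_pow (m + 1))))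
        (contOn_intervalIntegrable hcd.le
          (hcontj1.mul ((continuousOn_const).mul (continuousOn_pow m))))] at hFTC
      rw [ih (m + 1) (by omega)] at hFTC
      have e2 : (fun t => primIter c E (j + 1) t * (((m : ℝ) + 1) * t ^ m))
          = fun t => ((m : ℝ) + 1) * (primIter c E (j + 1) t * t ^ m) := by
        funext t; ring
      rw [e2, intervalIntegral.integral_const_mul] at hFTC
      have hm1 : ((m : ℝ) + 1) ≠ 0 := by positivity
      have : ((m : ℝ) + 1) * (∫ t in c..d, primIter c E (j + 1) t * t ^ m) = 0 := by
        simpa using hFTC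
      exact (mul_eq_zero.1 this).resolve_left hm1
  have hEd : ∀ j, j ≤ k → primIter c E (j + 1) d = 0 := by
    intro j hj
    have h0 := hO j 0 (by omega)
    rw [primIter_succ]
    simpa using h0
  -- the bilinear quantities
  set val : ℕ → ℝ := fun j => ∫ t in c..d, primIter c E j t * G (j + 1) t with hval
  have hstep : ∀ j, j < s → val j = -val (j + 1) := by
    intro j hj
    have hcontj : ContinuousOn (primIter c E j) (Icc c d) := primIter_contOn hcd.le hEcont j
    have hcontj1 : ContinuousOn (primIter c E (j + 1)) (Icc c d) :=
      primIter_contOn hcd.le hEcont (j + 1)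
    have hGc1 : ContinuousOn (G (j + 1)) (Icc c d) := (hGcont (j + 1) (by omega)).mono hsub
    have hGc2 : ContinuousOn (G (j + 2)) (Icc c d) := (hGcont (j + 2) (by omega)).mono hsub
    have hFd : ∀ x ∈ Ioo c d, HasDerivAt (fun t => primIter c E (j + 1) t * G (j + 1) t)
        (primIter c E j x * G (j + 1) x + primIter c E (j + 1) x * G (j + 2) x) x := by
      intro x hx
      exact (primIter_hasDerivAt hcd.le hEcont j hx).mul
        (hGderiv (j + 1) (by omega) x (hIooSub hx))
    have hFTC := ftc_on (F := fun t => primIter c E (j + 1) t * G (j + 1) t) hcd.le (hcontj1.mul hGc1) hFd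
      ((hcontj.mul hGc1).add (hcontj1.mul hGc2))
    rw [hEd j (by omega)] at hFTC
    rw [primIter_succ_left] at hFTC
    rw [intervalIntegral.integral_add (f := fun t => primIter c E j t * G (j + 1) t)
      (g := fun t => primIter c E (j + 1) t * G (j + 2) t)
      (contOn_intervalIntegrable hcd.le (hcontj.mul hGc1))
      (contOn_intervalIntegrable hcd.le (hcontj1.mul hGc2))] at hFTC
    have : val j + val (j + 1) = 0 := by
      rw [hval]
      simpa using hFTC
    linarith
  have habs : ∀ j, j ≤ s → |val 0| = |val j| := by
    intro j
    induction j with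
    | zero => intro _; rfl
    | succ j ih =>
      intro hj
      rw [ih (by omega), hstep j (by omega), abs_neg]
  -- val 0 = ∫ E²
  have hval0 : val 0 = ∫ t in c..d, E t ^ 2 := by
    have h1 : val 0 = ∫ t in c..d, E t * g0 t := by
      rw [hval]
      refine intervalIntegral.integral_congr fun t ht => ?_
      rw [uIcc_of_le hcd.le] at ht
      rw [primIter_zero, hg0G t (hsub ht)]
    have e1 : (fun t => E t * g0 t) = fun t => E t ^ 2 + E t * Q.eval t := by
      funext t; rw [hE]; ring
    rw [h1, e1, intervalIntegral.integral_add (f := fun t => E t ^ 2) (g := fun t => E t * Q.eval t)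
      (contOn_intervalIntegrable hcd.le (hEcont.pow 2))
      (contOn_intervalIntegrable hcd.le (hEcont.mul Q.continuous.continuousOn)),
      horthE Q hQdeg, add_zero]
  set I2 : ℝ := ∫ t in c..d, E t ^ 2 with hI2def
  have hI2 : 0 ≤ I2 := intervalIntegral.integral_nonneg hcd.le fun t _ => sq_nonneg _
  have hiter : ∀ j, (∫ t in c..d, primIter c E j t ^ 2) ≤ (d - c) ^ (2 * j) * I2 := by
    intro j
    induction j with
    | zero => rw [primIter_zero]; simp [hI2def]
    | succ j ih =>
      have h1 := poincare hcd.le (primIter_contOn hcd.le hEcont j)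
      have h2 : (∫ t in c..d, primIter c E (j + 1) t ^ 2)
          = ∫ t in c..d, (∫ τ in c..t, primIter c E j τ) ^ 2 := by
        rw [primIter_succ]
      have h3 : (d - c) ^ 2 * (∫ t in c..d, primIter c E j t ^ 2)
          ≤ (d - c) ^ 2 * ((d - c) ^ (2 * j) * I2) :=
        mul_le_mul_of_nonneg_left ih (sq_nonneg _)
      calc (∫ t in c..d, primIter c E (j + 1) t ^ 2)
          ≤ (d - c) ^ 2 * ∫ t in c..d, primIter c E j t ^ 2 := by rw [h2]; exact h1
        _ ≤ (d - c) ^ 2 * ((d - c) ^ (2 * j) * I2) := h3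
        _ = (d - c) ^ (2 * (j + 1)) * I2 := by ring
  set X : ℝ := Real.sqrt I2 with hX
  set Y : ℝ := Real.sqrt (∫ t in c..d, G (s + 1) t ^ 2) with hY
  have hYnn : 0 ≤ Y := Real.sqrt_nonneg _
  have hXnn : 0 ≤ X := Real.sqrt_nonneg _
  have hEs : Real.sqrt (∫ t in c..d, primIter c E s t ^ 2) ≤ (d - c) ^ s * X := by
    have h2 : (d - c) ^ (2 * s) * I2 = ((d - c) ^ s) ^ 2 * I2 := by ring
    calc Real.sqrt (∫ t in c..d, primIter c E s t ^ 2)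
        ≤ Real.sqrt (((d - c) ^ s) ^ 2 * I2) := Real.sqrt_le_sqrt (by rw [← h2]; exact hiter s)
      _ = (d - c) ^ s * X := by
          rw [Real.sqrt_mul (sq_nonneg _), Real.sqrt_sq (by positivity : (0:ℝ) ≤ (d - c) ^ s)]
  have hXle : X ≤ (d - c) ^ s * Y := by
    have h1 : I2 = |val 0| := by rw [hval0, abs_of_nonneg hI2]
    have hcs := cs_abs hcd.le (primIter_contOn hcd.le hEcont s)
      ((hGcont (s + 1) le_rfl).mono hsub)
    have h2 : I2 ≤ ((d - c) ^ s * Y) * X := by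
      rw [h1, habs s le_rfl]
      calc |val s| ≤ Real.sqrt (∫ t in c..d, primIter c E s t ^ 2) * Y := hcs
        _ ≤ ((d - c) ^ s * X) * Y := mul_le_mul_of_nonneg_right hEs hYnn
        _ = ((d - c) ^ s * Y) * X := by ring
    rcases eq_or_lt_of_le hXnn with h | h
    · rw [← h]; positivity
    · have h3 : X * X ≤ ((d - c) ^ s * Y) * X := by
        rwa [← Real.mul_self_sqrt hI2] at h2
      exact le_of_mul_le_mul_right h3 h
  -- the function u - P
  have hwrep : ∀ t ∈ Icc c d, u t - P.eval t = ∫ τ in c..t, E τ := by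
    intro t ht
    have hdw : ∀ x ∈ Ioo c t, HasDerivAt (fun τ => u τ - P.eval τ) (E x) x := by
      intro x hx
      have hx' : x ∈ Ioo c d := ⟨hx.1, lt_of_lt_of_le hx.2 ht.2⟩
      have h := (huderiv x (hIooSub hx')).sub (P.hasDerivAt x)
      rw [hPder] at h
      exact h
    have hsubt : Icc c t ⊆ Icc c d := Icc_subset_Icc le_rfl ht.2
    have hFTC := ftc_on ht.1 (((hucont.mono hsub).sub P.continuous.continuousOn).mono hsubt)
      hdw (hEcont.mono hsubt)
    rw [hFTC]
    simp [hPc]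
  have hw2 : (∫ t in c..d, (u t - P.eval t) ^ 2) ≤ (d - c) ^ 2 * I2 := by
    have hcongr : (∫ t in c..d, (u t - P.eval t) ^ 2)
        = ∫ t in c..d, (∫ τ in c..t, E τ) ^ 2 := by
      refine intervalIntegral.integral_congr fun t ht => ?_
      rw [uIcc_of_le hcd.le] at ht
      rw [hwrep t ht]
    rw [hcongr, hI2def]
    exact poincare hcd.le hEcont
  have hterm1 : Real.sqrt (∫ t in c..d, (u t - P.eval t) ^ 2) ≤ (d - c) * X := by
    calc Real.sqrt (∫ t in c..d, (u t - P.eval t) ^ 2)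
        ≤ Real.sqrt ((d - c) ^ 2 * I2) := Real.sqrt_le_sqrt hw2
      _ = (d - c) * X := by rw [Real.sqrt_mul (sq_nonneg _), Real.sqrt_sq hdc0.le]
  have hYsum : Y ≤ Real.sqrt (∑ j ∈ Finset.range (s + 2),
      ∫ t in c..d, (iteratedDerivWithin j u (Set.Icc a b) t) ^ 2) := by
    apply Real.sqrt_le_sqrt
    have hmem : s + 1 ∈ Finset.range (s + 2) := by simp
    exact Finset.single_le_sum
      (f := fun j => ∫ t in c..d, (iteratedDerivWithin j u (Set.Icc a b) t) ^ 2)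
      (fun j _ => intervalIntegral.integral_nonneg hcd.le fun t _ => sq_nonneg _) hmem
  refine ⟨P, hPdeg, hi, ⟨hPc, hPd⟩, ?_⟩
  have hIeq : (∫ t in c..d, (g0 t - Q.eval t) ^ 2) = I2 := by
    rw [hI2def]
  rw [hPder, hIeq, ← hX]
  have h2dc : (0:ℝ) ≤ 2 * (d - c) ^ (s + 1) := by positivity
  calc Real.sqrt (∫ t in c..d, (u t - P.eval t) ^ 2) + (d - c) * X
      ≤ (d - c) * X + (d - c) * X := by linarith [hterm1]
    _ = 2 * (d - c) * X := by ring
    _ ≤ 2 * (d - c) * ((d - c) ^ s * Y) :=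
        mul_le_mul_of_nonneg_left hXle (by positivity)
    _ = 2 * (d - c) ^ (s + 1) * Y := by ring
    _ ≤ 2 * (d - c) ^ (s + 1) * Real.sqrt (∑ j ∈ Finset.range (s + 2),
          ∫ t in c..d, (iteratedDerivWithin j u (Set.Icc a b) t) ^ 2) :=
        mul_le_mul_of_nonneg_left hYsum h2dc

end PihAux


/-- `p` is the discrete weak derivative of order `r` of the weak function
`(v0, vl, vr)` on the interval `(c, d)`: it is a polynomial of degree at most `r`
satisfying `∫ p q = -∫ v0 q' + vr q(d) - vl q(c)` for all polynomials `q` of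
degree at most `r`. -/
def IsWeakDeriv (r : ℕ) (c d : ℝ) (v0 : ℝ → ℝ) (vl vr : ℝ) (p : Polynomial ℝ) : Prop :=
  p.degree ≤ (r : WithBot ℕ) ∧ ∀ q : Polynomial ℝ, q.degree ≤ (r : WithBot ℕ) →
    (∫ t in c..d, p.eval t * q.eval t) =
      -(∫ t in c..d, v0 t * q.derivative.eval t) + vr * q.eval d - vl * q.eval c

/-- `p` is the L²(c,d)-orthogonal projection of `g` onto polynomials of degree at most `l`. -/
def IsL2Proj (l : ℕ) (c d : ℝ) (g : ℝ → ℝ) (p : Polynomial ℝ) : Prop :=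
  p.degree ≤ (l : WithBot ℕ) ∧ ∀ q : Polynomial ℝ, q.degree ≤ (l : WithBot ℕ) →
    (∫ t in c..d, (g t - p.eval t) * q.eval t) = 0

/-- `x 0 = a < x 1 < ⋯ < x (N-1) = b` is a partition of `(a,b)`. -/
def IsPartition (N : ℕ) (a b : ℝ) (x : ℕ → ℝ) : Prop :=
  2 ≤ N ∧ x 0 = a ∧ x (N - 1) = b ∧ ∀ i < N - 1, x i < x (i + 1)

/-- Membership in the weak finite element space `S_h`: on each of the `N - 1` elements the
interior component is a polynomial of degree at most `k`, the nodal values are single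
valued, and the nodal value at the left endpoint vanishes. -/
def MemSh (k N : ℕ) (v0 : ℕ → Polynomial ℝ) (vn : ℕ → ℝ) : Prop :=
  (∀ i < N - 1, (v0 i).degree ≤ (k : WithBot ℕ)) ∧ vn 0 = 0

/-- `D i` is the discrete weak derivative of order `r` of the weak finite element function
`(v0, vn)` on the `i`-th element `(x i, x (i+1))`. -/
def IsWeakDerivFam (r N : ℕ) (x : ℕ → ℝ) (v0 : ℕ → Polynomial ℝ) (vn : ℕ → ℝ)
    (D : ℕ → Polynomial ℝ) : Prop :=
  ∀ i < N - 1, IsWeakDeriv r (x i) (x (i + 1)) (fun t => (v0 i).eval t) (vn i) (vn (i + 1)) (D i)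

/-- `(u0, un)` with discrete weak derivatives `Du` is a weak finite element solution:
it belongs to `S_h` and satisfies
`(a2 d_w u_h, d_w v)_h + (a0 u_h⁰, v⁰) = (f, v⁰)` for all `v ∈ S_h`. -/
def IsWFESol (k r N : ℕ) (x : ℕ → ℝ) (a2 a0 f : ℝ → ℝ)
    (u0 : ℕ → Polynomial ℝ) (un : ℕ → ℝ) (Du : ℕ → Polynomial ℝ) : Prop :=
  MemSh k N u0 un ∧ IsWeakDerivFam r N x u0 un Du ∧
  ∀ (v0 : ℕ → Polynomial ℝ) (vn : ℕ → ℝ) (Dv : ℕ → Polynomial ℝ),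
    MemSh k N v0 vn → IsWeakDerivFam r N x v0 vn Dv →
    ((∑ i ∈ Finset.range (N - 1), ∫ t in x i..x (i + 1), a2 t * (Du i).eval t * (Dv i).eval t)
      + ∑ i ∈ Finset.range (N - 1), ∫ t in x i..x (i + 1), a0 t * (u0 i).eval t * (v0 i).eval t)
      = ∑ i ∈ Finset.range (N - 1), ∫ t in x i..x (i + 1), f t * (v0 i).eval t

/-- Lemma 4.1, the projection `π_h`. Let `k ≥ 0` and `0 ≤ s ≤ k + 1`.
There is a constant `C > 0` depending only on `k` and `s` such that for every partition of
`(a,b)` and every `(s+1)`-times continuously differentiable `u` on `[a,b]` there are element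
polynomials `P i` of degree at most `k+1` (the pieces of `π_h u`, which match `u` at the
nodes and hence glue to a continuous function) such that
(i) `∫_{I_i} (π_h u)' q = ∫_{I_i} u' q` for all polynomials `q` of degree ≤ `k`,
(ii) `π_h u (x_i) = u (x_i)` at all nodes, and
(iii) `‖u - π_h u‖_{L²(I_i)} + h_i ‖(u - π_h u)'‖_{L²(I_i)} ≤ C h_i^{s+1} ‖u‖_{H^{s+1}(I_i)}`. -/
theorem pih_projection_exists (k s : ℕ) (hs : s ≤ k + 1) :
    ∃ C > (0 : ℝ), ∀ (a b : ℝ) (N : ℕ) (x : ℕ → ℝ), IsPartition N a b x →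
      ∀ u : ℝ → ℝ, ContDiffOn ℝ (s + 1) u (Set.Icc a b) →
      ∃ P : ℕ → Polynomial ℝ,
        (∀ i < N - 1, (P i).degree ≤ ((k + 1 : ℕ) : WithBot ℕ)) ∧
        (∀ i < N - 1, ∀ q : Polynomial ℝ, q.degree ≤ (k : WithBot ℕ) →
          (∫ t in x i..x (i + 1), (P i).derivative.eval t * q.eval t)
            = ∫ t in x i..x (i + 1), derivWithin u (Set.Icc a b) t * q.eval t) ∧
        (∀ i < N - 1, (P i).eval (x i) = u (x i) ∧ (P i).eval (x (i + 1)) = u (x (i + 1))) ∧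
        (∀ i < N - 1,
          Real.sqrt (∫ t in x i..x (i + 1), (u t - (P i).eval t) ^ 2)
            + (x (i + 1) - x i) *
              Real.sqrt (∫ t in x i..x (i + 1),
                (derivWithin u (Set.Icc a b) t - (P i).derivative.eval t) ^ 2)
          ≤ C * (x (i + 1) - x i) ^ (s + 1) *
              Real.sqrt (∑ j ∈ Finset.range (s + 2),
                ∫ t in x i..x (i + 1), (iteratedDerivWithin j u (Set.Icc a b) t) ^ 2)) := by
  refine ⟨2, by norm_num, ?_⟩
  intro a b N x hp u hu
  obtain ⟨hN, hx0, hxN, hmono⟩ := hp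
  have hle : ∀ j, j ≤ N - 1 → ∀ i, i ≤ j → x i ≤ x j := by
    intro j
    induction j with
    | zero => intro _ i hi; rw [Nat.le_zero.1 hi]
    | succ j ih =>
      intro hj i hi
      rcases Nat.eq_or_lt_of_le hi with h | h
      · rw [h]
      · exact le_trans (ih (by omega) i (by omega)) (le_of_lt (hmono j (by omega)))
  have hbounds : ∀ i, i < N - 1 → a ≤ x i ∧ x (i + 1) ≤ b := by
    intro i hi
    constructor
    · rw [← hx0]; exact hle i (by omega) 0 (Nat.zero_le _)
    · rw [← hxN]; exact hle (N - 1) le_rfl (i + 1) (by omega)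
  choose Pfun hdeg hortho hval hest using fun (i : ℕ) (hi : i < N - 1) =>
    PihAux.elem k s hs (hbounds i hi).1 (hmono i hi) (hbounds i hi).2 hu
  refine ⟨fun i => if h : i < N - 1 then Pfun i h else 0, ?_, ?_, ?_, ?_⟩
  · intro i hi; simp only [dif_pos hi]; exact hdeg i hi
  · intro i hi q hq; simp only [dif_pos hi]; exact hortho i hi q hq
  · intro i hi; simp only [dif_pos hi]; exact (hval i hi)
  · intro i hi; simp only [dif_pos hi]; exact hest i hi

end
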